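/- Define f₂(n) = 1 + 14·(1 + 6 + 6² + … + 6ⁿ) and c₂(n) = 1 + 13·(1 + 5 + 5² + … + 5ⁿ) for natural numbers n. Then the sequence log(c₂(n)) / log(f₂(n)) converges, as n → ∞, to log 5 / log 6 (equivalently, log_{f₂(n)} c₂(n) → log₆ 5). -/

import Mathlib

open Filter Real

lemma aux_tendsto (r c : ℝ) (hr : 1 < r) (hc : 0 < c) :
    Tendsto (fun n : ℕ =>
      Real.log (1 + c * ∑ k ∈ Finset.range (n + 1), r ^ k) / ((n : ℝ) + 1))
      atTop (nhds (Real.log r)) := by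
  have hr0 : (0:ℝ) < r := lt_trans one_pos hr
  have hr1 : r ≠ 1 := ne_of_gt hr
  have hrm : r - 1 ≠ 0 := sub_ne_zero.mpr hr1
  have hrmpos : (0:ℝ) < r - 1 := sub_pos.mpr hr
  set L : ℝ := c / (r - 1) with hL
  have hLpos : 0 < L := div_pos hc hrmpos
  -- Q n := E n / r^(n+1)
  have hQ : ∀ n : ℕ, (1 + c * ∑ k ∈ Finset.range (n + 1), r ^ k) / r ^ (n+1)
      = (1 - L) * (1/r) ^ (n+1) + L := by
    intro n
    rw [geom_sum_eq hr1]
    have hp : r ^ (n+1) ≠ 0 := pow_ne_zero _ (ne_of_gt hr0)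
    rw [hL, one_div, inv_pow]
    field_simp
    ring
  have hQt : Tendsto (fun n : ℕ =>
      (1 + c * ∑ k ∈ Finset.range (n + 1), r ^ k) / r ^ (n+1)) atTop (nhds L) := by
    simp only [hQ]
    have h0 : Tendsto (fun n : ℕ => (1/r) ^ n) atTop (nhds 0) := by
      apply tendsto_pow_atTop_nhds_zero_of_lt_one
      · positivity
      · rw [div_lt_one hr0]; exact hr
    have h1 : Tendsto (fun n : ℕ => (1/r) ^ (n+1)) atTop (nhds 0) :=
      h0.comp (tendsto_add_atTop_nat 1)
    have := (h1.const_mul (1 - L)).add_const L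
    simpa using this
  have hEpos : ∀ n : ℕ, 0 < 1 + c * ∑ k ∈ Finset.range (n + 1), r ^ k := by
    intro n
    have : 0 < ∑ k ∈ Finset.range (n + 1), r ^ k :=
      Finset.sum_pos (fun k _ => pow_pos hr0 k) ⟨0, Finset.mem_range.mpr (Nat.succ_pos n)⟩
    positivity
  have hlogQ : Tendsto (fun n : ℕ =>
      Real.log ((1 + c * ∑ k ∈ Finset.range (n + 1), r ^ k) / r ^ (n+1)))
      atTop (nhds (Real.log L)) :=
    ((Real.continuousAt_log (ne_of_gt hLpos)).tendsto).comp hQt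
  have hsplit : ∀ n : ℕ,
      Real.log (1 + c * ∑ k ∈ Finset.range (n + 1), r ^ k) / ((n : ℝ) + 1)
      = Real.log r +
        Real.log ((1 + c * ∑ k ∈ Finset.range (n + 1), r ^ k) / r ^ (n+1)) / ((n : ℝ) + 1) := by
    intro n
    have hp : (0:ℝ) < r ^ (n+1) := pow_pos hr0 _
    rw [Real.log_div (ne_of_gt (hEpos n)) (ne_of_gt hp), Real.log_pow]
    have hn : ((n:ℝ) + 1) ≠ 0 := by positivity
    field_simp
    push_cast
    ring
  simp only [hsplit]
  have hd : Tendsto (fun n : ℕ =>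
      Real.log ((1 + c * ∑ k ∈ Finset.range (n + 1), r ^ k) / r ^ (n+1)) / ((n : ℝ) + 1))
      atTop (nhds 0) := by
    apply Tendsto.div_atTop hlogQ
    exact tendsto_atTop_add_const_right atTop 1 tendsto_natCast_atTop_atTop
  have := (tendsto_const_nhds : Tendsto (fun _ : ℕ => Real.log r) atTop _).add hd
  simpa using this

theorem shortness_limit_F2 :
    Tendsto
      (fun n : ℕ =>
        Real.log (1 + 13 * ∑ k ∈ Finset.range (n + 1), (5 : ℝ) ^ k) /
        Real.log (1 + 14 * ∑ k ∈ Finset.range (n + 1), (6 : ℝ) ^ k))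
      atTop (nhds (Real.log 5 / Real.log 6)) := by
  have h5 := aux_tendsto 5 13 (by norm_num) (by norm_num)
  have h6 := aux_tendsto 6 14 (by norm_num) (by norm_num)
  have hlog6 : Real.log 6 ≠ 0 := by
    exact ne_of_gt (Real.log_pos (by norm_num))
  have := h5.div h6 hlog6
  refine this.congr fun n => ?_
  have hn : ((n:ℝ) + 1) ≠ 0 := by positivity
  rw [Pi.div_apply, div_div_div_cancel_right₀ hn]
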